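/- Let R ≥ 1, n₀ = s₀ + i₀, d = min(D_I, D_S), D = max(D_I, D_S), N₊(x) = (D/d)(n₀ + R)(x/m) + N(x,0), C(x) = 2β₀N₊(x) + μ + D_I + D and M = max_{x ∈ J} C(x). Let T > 0 and, for j = 1, 2, let (s_j, i_j) be continuous nonnegative functions on [0,T] with s_j(0) = s₀, i_j(0) = i₀ and sup_t(|s_j(t) − s₀| + |i_j(t) − i₀|) ≤ R. Let (Ŝ_j, Î_j) be the solution of system (Ĉ) with data (s_j, i_j) and initial data (S₀, I₀), with Ŝ_j, Î_j ≥ 0 and Ŝ_j + Î_j ≤ N₊ on J × [0,T], and set ŝ_j(t) = ⟨Ŝ_j(·,t)⟩, î_j(t) = ⟨Î_j(·,t)⟩. Then sup_{t ∈ [0,T]}(|ŝ₂(t) − ŝ₁(t)| + |î₂(t) − î₁(t)|) ≤ 8(e^{MT} − 1) · sup_{t ∈ [0,T]}(|s₂(t) − s₁(t)| + |i₂(t) − i₁(t)|). -/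

import Mathlib

open Real Set

set_option maxHeartbeats 1000000 in
/-- Core Grönwall estimate for the difference of two solutions of the hat system. -/
lemma sir_gronwall_core
    {μ β₀ DS DI T B K ε δ : ℝ}
    {a₁ b₁ a₂ b₂ P₁ Q₁ P₂ Q₂ : ℝ → ℝ}
    (hT : 0 ≤ T) (hμ : 0 ≤ μ) (hβ : 0 ≤ β₀) (hDS : 0 ≤ DS) (hDI : 0 ≤ DI) (hB : 0 ≤ B)
    (hP₁ : ∀ t ∈ Icc (0:ℝ) T, HasDerivAt P₁ (Q₁ t * (μ - β₀ * P₁ t) - DS * (P₁ t - a₁ t)) t)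
    (hQ₁ : ∀ t ∈ Icc (0:ℝ) T, HasDerivAt Q₁ (Q₁ t * (-μ + β₀ * P₁ t) - DI * (Q₁ t - b₁ t)) t)
    (hP₂ : ∀ t ∈ Icc (0:ℝ) T, HasDerivAt P₂ (Q₂ t * (μ - β₀ * P₂ t) - DS * (P₂ t - a₂ t)) t)
    (hQ₂ : ∀ t ∈ Icc (0:ℝ) T, HasDerivAt Q₂ (Q₂ t * (-μ + β₀ * P₂ t) - DI * (Q₂ t - b₂ t)) t)
    (hbox : ∀ t ∈ Icc (0:ℝ) T, |Q₁ t| ≤ B ∧ |P₂ t| ≤ B)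
    (hK1 : μ + 2*β₀*B + DS ≤ K) (hK2 : μ + 2*β₀*B + DI ≤ K)
    (hε1 : ∀ t ∈ Icc (0:ℝ) T, DS * |a₂ t - a₁ t| ≤ ε)
    (hε2 : ∀ t ∈ Icc (0:ℝ) T, DI * |b₂ t - b₁ t| ≤ ε)
    (hδ1 : |P₂ 0 - P₁ 0| ≤ δ) (hδ2 : |Q₂ 0 - Q₁ 0| ≤ δ) :
    ∀ t ∈ Icc (0:ℝ) T, |P₂ t - P₁ t| ≤ gronwallBound δ K ε t ∧
      |Q₂ t - Q₁ t| ≤ gronwallBound δ K ε t := by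
  set f : ℝ → ℝ × ℝ := fun t => (P₂ t - P₁ t, Q₂ t - Q₁ t) with hf_def
  set f' : ℝ → ℝ × ℝ := fun t =>
    (Q₂ t * (μ - β₀ * P₂ t) - DS * (P₂ t - a₂ t) -
        (Q₁ t * (μ - β₀ * P₁ t) - DS * (P₁ t - a₁ t)),
     Q₂ t * (-μ + β₀ * P₂ t) - DI * (Q₂ t - b₂ t) -
        (Q₁ t * (-μ + β₀ * P₁ t) - DI * (Q₁ t - b₁ t))) with hf'_def
  have hnorm : ∀ t, ‖f t‖ = max |P₂ t - P₁ t| |Q₂ t - Q₁ t| := by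
    intro t
    rw [hf_def]
    rw [Prod.norm_def, Real.norm_eq_abs, Real.norm_eq_abs]
  have hmain : ∀ t ∈ Icc (0:ℝ) T, ‖f t‖ ≤ gronwallBound δ K ε (t - 0) := by
    apply norm_le_gronwallBound_of_norm_deriv_right_le
    · intro t ht
      exact (((hP₂ t ht).sub (hP₁ t ht)).continuousAt.prodMk
        ((hQ₂ t ht).sub (hQ₁ t ht)).continuousAt).continuousWithinAt
    · intro t ht
      have ht' : t ∈ Icc (0:ℝ) T := Ico_subset_Icc_self ht
      exact (((hP₂ t ht').sub (hP₁ t ht')).prodMk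
        ((hQ₂ t ht').sub (hQ₁ t ht'))).hasDerivWithinAt
    · rw [hnorm]
      exact max_le hδ1 hδ2
    · intro t ht
      have ht' : t ∈ Icc (0:ℝ) T := Ico_subset_Icc_self ht
      have hfnorm : ‖f' t‖ = max |(f' t).1| |(f' t).2| := by
        rw [Prod.norm_def, Real.norm_eq_abs, Real.norm_eq_abs]
      show ‖f' t‖ ≤ K * ‖f t‖ + ε
      rw [hnorm t, hfnorm]
      set u := P₂ t - P₁ t with hu
      set v := Q₂ t - Q₁ t with hv
      obtain ⟨hQ₁B, hP₂B⟩ := hbox t ht'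
      have hX : |v * P₂ t + Q₁ t * u| ≤ |v| * B + B * |u| := by
        refine (abs_add_le _ _).trans (add_le_add ?_ ?_)
        · rw [abs_mul]; exact mul_le_mul_of_nonneg_left hP₂B (abs_nonneg v)
        · rw [abs_mul]; exact mul_le_mul_of_nonneg_right hQ₁B (abs_nonneg u)
      have hW1 : |u| ≤ max |u| |v| := le_max_left _ _
      have hW2 : |v| ≤ max |u| |v| := le_max_right _ _
      have hW0 : 0 ≤ max |u| |v| := le_trans (abs_nonneg u) hW1
      have habs2 : |β₀ * (v * P₂ t + Q₁ t * u)| ≤ β₀ * (|v| * B + B * |u|) := by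
        rw [abs_mul, abs_of_nonneg hβ]
        exact mul_le_mul_of_nonneg_left hX hβ
      have hcommon : μ * |v| + β₀ * (|v| * B + B * |u|) ≤ (μ + 2*β₀*B) * max |u| |v| := by
        nlinarith [mul_le_mul_of_nonneg_left hW2 hμ,
          mul_le_mul_of_nonneg_right hW2 (mul_nonneg hβ hB),
          mul_le_mul_of_nonneg_right hW1 (mul_nonneg hβ hB)]
      apply max_le
      · have heq : (f' t).1 = μ * v - β₀ * (v * P₂ t + Q₁ t * u) - DS * u
            + DS * (a₂ t - a₁ t) := by
          simp only [hf'_def, hu, hv]; ring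
        rw [heq]
        have tri : |μ * v - β₀ * (v * P₂ t + Q₁ t * u) - DS * u + DS * (a₂ t - a₁ t)| ≤
            |μ * v| + |β₀ * (v * P₂ t + Q₁ t * u)| + |DS * u| + |DS * (a₂ t - a₁ t)| := by
          calc |μ * v - β₀ * (v * P₂ t + Q₁ t * u) - DS * u + DS * (a₂ t - a₁ t)|
              ≤ |μ * v - β₀ * (v * P₂ t + Q₁ t * u) - DS * u| + |DS * (a₂ t - a₁ t)| :=
                abs_add_le _ _
            _ ≤ |μ * v - β₀ * (v * P₂ t + Q₁ t * u)| + |DS * u| + |DS * (a₂ t - a₁ t)| := by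
                linarith [abs_sub (μ * v - β₀ * (v * P₂ t + Q₁ t * u)) (DS * u)]
            _ ≤ |μ * v| + |β₀ * (v * P₂ t + Q₁ t * u)| + |DS * u| + |DS * (a₂ t - a₁ t)| := by
                linarith [abs_sub (μ * v) (β₀ * (v * P₂ t + Q₁ t * u))]
        have h1 : |μ * v| = μ * |v| := by rw [abs_mul, abs_of_nonneg hμ]
        have h3 : |DS * u| = DS * |u| := by rw [abs_mul, abs_of_nonneg hDS]
        have h4 : |DS * (a₂ t - a₁ t)| ≤ ε := by
          rw [abs_mul, abs_of_nonneg hDS]; exact hε1 t ht'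
        have h5 : DS * |u| ≤ DS * max |u| |v| := mul_le_mul_of_nonneg_left hW1 hDS
        have h6 : (μ + 2*β₀*B) * max |u| |v| + DS * max |u| |v| ≤ K * max |u| |v| := by
          nlinarith [mul_le_mul_of_nonneg_right hK1 hW0]
        linarith
      · have heq : (f' t).2 = -(μ * v) + β₀ * (v * P₂ t + Q₁ t * u) - DI * v
            + DI * (b₂ t - b₁ t) := by
          simp only [hf'_def, hu, hv]; ring
        rw [heq]
        have tri : |-(μ * v) + β₀ * (v * P₂ t + Q₁ t * u) - DI * v + DI * (b₂ t - b₁ t)| ≤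
            |μ * v| + |β₀ * (v * P₂ t + Q₁ t * u)| + |DI * v| + |DI * (b₂ t - b₁ t)| := by
          calc |-(μ * v) + β₀ * (v * P₂ t + Q₁ t * u) - DI * v + DI * (b₂ t - b₁ t)|
              ≤ |-(μ * v) + β₀ * (v * P₂ t + Q₁ t * u) - DI * v| + |DI * (b₂ t - b₁ t)| :=
                abs_add_le _ _
            _ ≤ |-(μ * v) + β₀ * (v * P₂ t + Q₁ t * u)| + |DI * v| + |DI * (b₂ t - b₁ t)| := by
                linarith [abs_sub (-(μ * v) + β₀ * (v * P₂ t + Q₁ t * u)) (DI * v)]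
            _ ≤ |-(μ * v)| + |β₀ * (v * P₂ t + Q₁ t * u)| + |DI * v| + |DI * (b₂ t - b₁ t)| := by
                linarith [abs_add_le (-(μ * v)) (β₀ * (v * P₂ t + Q₁ t * u))]
            _ = |μ * v| + |β₀ * (v * P₂ t + Q₁ t * u)| + |DI * v| + |DI * (b₂ t - b₁ t)| := by
                rw [abs_neg]
        have h1 : |μ * v| = μ * |v| := by rw [abs_mul, abs_of_nonneg hμ]
        have h3 : |DI * v| = DI * |v| := by rw [abs_mul, abs_of_nonneg hDI]
        have h4 : |DI * (b₂ t - b₁ t)| ≤ ε := by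
          rw [abs_mul, abs_of_nonneg hDI]; exact hε2 t ht'
        have h5 : DI * |v| ≤ DI * max |u| |v| := mul_le_mul_of_nonneg_left hW2 hDI
        have h6 : (μ + 2*β₀*B) * max |u| |v| + DI * max |u| |v| ≤ K * max |u| |v| := by
          nlinarith [mul_le_mul_of_nonneg_right hK2 hW0]
        linarith
  intro t ht
  have h := hmain t ht
  rw [sub_zero, hnorm] at h
  exact ⟨le_trans (le_max_left _ _) h, le_trans (le_max_right _ _) h⟩

set_option maxHeartbeats 1000000 in
/-- Lipschitz continuity in the structure variable `x` of the solutions of the hat system,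
deduced from the Grönwall estimate. -/
lemma sir_cont_in_x
    {xmax m μ β₀ DS DI T B K Cs L : ℝ}
    {S₀ I₀ s i : ℝ → ℝ} {S I : ℝ → ℝ → ℝ}
    (hm : 0 < m) (hμ : 0 < μ) (hβ : 0 < β₀) (hDS : 0 < DS) (hDI : 0 < DI)
    (hT : 0 ≤ T) (hB : 0 ≤ B) (hK : 0 < K) (hCs : 0 ≤ Cs) (hL : 0 ≤ L)
    (hSeq : ∀ x ∈ Icc (0:ℝ) xmax, ∀ t ∈ Icc (0:ℝ) T,
      HasDerivAt (S x) (I x t * (μ - β₀ * S x t) - DS * (S x t - x / m * s t)) t)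
    (hIeq : ∀ x ∈ Icc (0:ℝ) xmax, ∀ t ∈ Icc (0:ℝ) T,
      HasDerivAt (I x) (I x t * (-μ + β₀ * S x t) - DI * (I x t - x / m * i t)) t)
    (hbox : ∀ x ∈ Icc (0:ℝ) xmax, ∀ t ∈ Icc (0:ℝ) T, |I x t| ≤ B ∧ |S x t| ≤ B)
    (hK1 : μ + 2*β₀*B + DS ≤ K) (hK2 : μ + 2*β₀*B + DI ≤ K)
    (hs_bd : ∀ t ∈ Icc (0:ℝ) T, |s t| ≤ Cs) (hi_bd : ∀ t ∈ Icc (0:ℝ) T, |i t| ≤ Cs)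
    (hS0 : ∀ x ∈ Icc (0:ℝ) xmax, S x 0 = S₀ x) (hI0 : ∀ x ∈ Icc (0:ℝ) xmax, I x 0 = I₀ x)
    (hLip : ∀ x ∈ Icc (0:ℝ) xmax, ∀ y ∈ Icc (0:ℝ) xmax,
      |S₀ x - S₀ y| ≤ L * |x - y| ∧ |I₀ x - I₀ y| ≤ L * |x - y|) :
    ∀ t ∈ Icc (0:ℝ) T, ContinuousOn (fun x => S x t) (Icc (0:ℝ) xmax) ∧
      ContinuousOn (fun x => I x t) (Icc (0:ℝ) xmax) := by
  intro t ht
  set CL : ℝ := L * Real.exp (K*T) + (max DI DS * Cs / m) / K * (Real.exp (K*T) - 1)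
    with hCLdef
  have hexpT : 1 ≤ Real.exp (K*T) := Real.one_le_exp (mul_nonneg hK.le hT)
  have hD0 : (0:ℝ) ≤ max DI DS := le_trans hDI.le (le_max_left _ _)
  have hc0 : 0 ≤ max DI DS * Cs / m / K := by positivity
  have hCL : 0 ≤ CL := by
    rw [hCLdef]
    have := mul_nonneg hL (Real.exp_nonneg (K*T))
    nlinarith
  have both : ∀ x ∈ Icc (0:ℝ) xmax, ∀ y ∈ Icc (0:ℝ) xmax,
      |S x t - S y t| ≤ CL * |x - y| ∧ |I x t - I y t| ≤ CL * |x - y| := by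
    intro x hx y hy
    have hg := sir_gronwall_core (ε := max DI DS * Cs / m * |x - y|) (δ := L * |x - y|)
      hT hμ.le hβ.le hDS.le hDI.le hB
      (hSeq y hy) (hIeq y hy) (hSeq x hx) (hIeq x hx)
      (fun τ hτ => ⟨(hbox y hy τ hτ).1, (hbox x hx τ hτ).2⟩) hK1 hK2
      (by
        intro τ hτ
        have heq : x / m * s τ - y / m * s τ = s τ * (x - y) / m := by ring
        rw [heq, abs_div, abs_mul, abs_of_pos hm]
        have h1 : DS * |s τ| ≤ max DI DS * Cs :=
          mul_le_mul (le_max_right DI DS) (hs_bd τ hτ) (abs_nonneg _) hD0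
        calc DS * (|s τ| * |x - y| / m) = (DS * |s τ|) * (|x - y| / m) := by ring
          _ ≤ (max DI DS * Cs) * (|x - y| / m) :=
              mul_le_mul_of_nonneg_right h1 (by positivity)
          _ = max DI DS * Cs / m * |x - y| := by ring)
      (by
        intro τ hτ
        have heq : x / m * i τ - y / m * i τ = i τ * (x - y) / m := by ring
        rw [heq, abs_div, abs_mul, abs_of_pos hm]
        have h1 : DI * |i τ| ≤ max DI DS * Cs :=
          mul_le_mul (le_max_left DI DS) (hi_bd τ hτ) (abs_nonneg _) hD0
        calc DI * (|i τ| * |x - y| / m) = (DI * |i τ|) * (|x - y| / m) := by ring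
          _ ≤ (max DI DS * Cs) * (|x - y| / m) :=
              mul_le_mul_of_nonneg_right h1 (by positivity)
          _ = max DI DS * Cs / m * |x - y| := by ring)
      (by rw [hS0 x hx, hS0 y hy]; exact (hLip x hx y hy).1)
      (by rw [hI0 x hx, hI0 y hy]; exact (hLip x hx y hy).2)
      t ht
    have hgb : gronwallBound (L * |x - y|) K (max DI DS * Cs / m * |x - y|) t ≤
        CL * |x - y| := by
      simp only [gronwallBound_of_K_ne_0 hK.ne']
      have h1 : Real.exp (K*t) ≤ Real.exp (K*T) :=
        Real.exp_le_exp.mpr (mul_le_mul_of_nonneg_left ht.2 hK.le)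
      have h2 : 1 ≤ Real.exp (K*t) := Real.one_le_exp (mul_nonneg hK.le ht.1)
      have e1 : L * |x - y| * Real.exp (K*t) ≤ L * |x - y| * Real.exp (K*T) :=
        mul_le_mul_of_nonneg_left h1 (mul_nonneg hL (abs_nonneg _))
      have e2 : max DI DS * Cs / m * |x - y| / K * (Real.exp (K*t) - 1) ≤
          max DI DS * Cs / m * |x - y| / K * (Real.exp (K*T) - 1) :=
        mul_le_mul_of_nonneg_left (by linarith) (by positivity)
      have e3 : L * |x - y| * Real.exp (K*T) +
          max DI DS * Cs / m * |x - y| / K * (Real.exp (K*T) - 1) = CL * |x - y| := by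
        rw [hCLdef]; ring
      linarith
    exact ⟨hg.1.trans hgb, hg.2.trans hgb⟩
  constructor
  · apply LipschitzOnWith.continuousOn (K := CL.toNNReal)
    apply LipschitzOnWith.of_dist_le_mul
    intro x hx y hy
    rw [Real.dist_eq, Real.dist_eq, Real.coe_toNNReal CL hCL]
    exact (both x hx y hy).1
  · apply LipschitzOnWith.continuousOn (K := CL.toNNReal)
    apply LipschitzOnWith.of_dist_le_mul
    intro x hx y hy
    rw [Real.dist_eq, Real.dist_eq, Real.coe_toNNReal CL hCL]
    exact (both x hx y hy).2

set_option maxHeartbeats 1000000 in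
/-- Second part of Proposition 3 (`H_2`): Lipschitz estimate for the map
`(s,i) ↦ (ŝ,î)` in the general case `D_I, D_S > 0`:
`‖(ŝ₂,î₂) - (ŝ₁,î₁)‖ ≤ 8(e^{MT} - 1)‖(s₂,i₂) - (s₁,i₁)‖`, where
`M = max_{x∈J} C(x)`, `C(x) = 2β₀N₊(x) + μ + D_I + D`. -/
theorem contraction_estimate_general_case
    (xmax m μ β₀ DS DI : ℝ) (p : ℝ → ℝ)
    (hxmax : 0 < xmax) (hm : 0 < m) (hμ : 0 < μ) (hβ₀ : 0 < β₀)
    (hDS : 0 < DS) (hDI : 0 < DI)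
    (hp_nonneg : ∀ x ∈ Icc (0:ℝ) xmax, 0 ≤ p x) (hp0 : p 0 = 0)
    (hp_int : ∫ x in (0:ℝ)..xmax, p x = 1)
    (hm_def : m = ∫ x in (0:ℝ)..xmax, x * p x)
    (S₀ I₀ : ℝ → ℝ)
    (hS₀ : ContDiff ℝ 1 S₀) (hI₀ : ContDiff ℝ 1 I₀)
    (hS₀nonneg : ∀ x ∈ Icc (0:ℝ) xmax, 0 ≤ S₀ x)
    (hI₀nonneg : ∀ x ∈ Icc (0:ℝ) xmax, 0 ≤ I₀ x)
    (hS₀zero : S₀ 0 = 0) (hI₀zero : I₀ 0 = 0)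
    (s₀ i₀ : ℝ)
    (hs₀ : s₀ = ∫ x in (0:ℝ)..xmax, S₀ x * p x)
    (hi₀ : i₀ = ∫ x in (0:ℝ)..xmax, I₀ x * p x)
    (hs₀pos : 0 < s₀) (hi₀pos : 0 < i₀)
    (R : ℝ) (hR : 1 ≤ R)
    (n₀ : ℝ) (hn₀ : n₀ = s₀ + i₀)
    (Nplus Cfn : ℝ → ℝ)
    (hNplus : ∀ x, Nplus x =
      max DI DS / min DI DS * (n₀ + R) * (x / m) + (S₀ x + I₀ x))
    (hCfn : ∀ x, Cfn x = 2 * β₀ * Nplus x + μ + DI + max DI DS)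
    (M : ℝ) (hM : IsGreatest (Cfn '' Icc (0:ℝ) xmax) M)
    (T : ℝ) (hT : 0 < T)
    (s₁ i₁ s₂ i₂ : ℝ → ℝ)
    (hs₁cont : ContinuousOn s₁ (Icc 0 T)) (hi₁cont : ContinuousOn i₁ (Icc 0 T))
    (hs₂cont : ContinuousOn s₂ (Icc 0 T)) (hi₂cont : ContinuousOn i₂ (Icc 0 T))
    (hs₁nonneg : ∀ t ∈ Icc (0:ℝ) T, 0 ≤ s₁ t) (hi₁nonneg : ∀ t ∈ Icc (0:ℝ) T, 0 ≤ i₁ t)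
    (hs₂nonneg : ∀ t ∈ Icc (0:ℝ) T, 0 ≤ s₂ t) (hi₂nonneg : ∀ t ∈ Icc (0:ℝ) T, 0 ≤ i₂ t)
    (hs₁0 : s₁ 0 = s₀) (hi₁0 : i₁ 0 = i₀) (hs₂0 : s₂ 0 = s₀) (hi₂0 : i₂ 0 = i₀)
    (h₁E : ∀ t ∈ Icc (0:ℝ) T, |s₁ t - s₀| + |i₁ t - i₀| ≤ R)
    (h₂E : ∀ t ∈ Icc (0:ℝ) T, |s₂ t - s₀| + |i₂ t - i₀| ≤ R)
    (S₁ I₁ S₂ I₂ : ℝ → ℝ → ℝ)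
    (hS₁eq : ∀ x ∈ Icc (0:ℝ) xmax, ∀ t ∈ Icc (0:ℝ) T,
      HasDerivAt (S₁ x) (I₁ x t * (μ - β₀ * S₁ x t) - DS * (S₁ x t - x / m * s₁ t)) t)
    (hI₁eq : ∀ x ∈ Icc (0:ℝ) xmax, ∀ t ∈ Icc (0:ℝ) T,
      HasDerivAt (I₁ x) (I₁ x t * (-μ + β₀ * S₁ x t) - DI * (I₁ x t - x / m * i₁ t)) t)
    (hS₂eq : ∀ x ∈ Icc (0:ℝ) xmax, ∀ t ∈ Icc (0:ℝ) T,
      HasDerivAt (S₂ x) (I₂ x t * (μ - β₀ * S₂ x t) - DS * (S₂ x t - x / m * s₂ t)) t)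
    (hI₂eq : ∀ x ∈ Icc (0:ℝ) xmax, ∀ t ∈ Icc (0:ℝ) T,
      HasDerivAt (I₂ x) (I₂ x t * (-μ + β₀ * S₂ x t) - DI * (I₂ x t - x / m * i₂ t)) t)
    (hS₁init : ∀ x ∈ Icc (0:ℝ) xmax, S₁ x 0 = S₀ x)
    (hI₁init : ∀ x ∈ Icc (0:ℝ) xmax, I₁ x 0 = I₀ x)
    (hS₂init : ∀ x ∈ Icc (0:ℝ) xmax, S₂ x 0 = S₀ x)
    (hI₂init : ∀ x ∈ Icc (0:ℝ) xmax, I₂ x 0 = I₀ x)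
    (h₁pos : ∀ x ∈ Icc (0:ℝ) xmax, ∀ t ∈ Icc (0:ℝ) T,
      0 ≤ S₁ x t ∧ 0 ≤ I₁ x t ∧ S₁ x t + I₁ x t ≤ Nplus x)
    (h₂pos : ∀ x ∈ Icc (0:ℝ) xmax, ∀ t ∈ Icc (0:ℝ) T,
      0 ≤ S₂ x t ∧ 0 ≤ I₂ x t ∧ S₂ x t + I₂ x t ≤ Nplus x) :
    ∀ t ∈ Icc (0:ℝ) T,
      |(∫ x in (0:ℝ)..xmax, S₂ x t * p x) - ∫ x in (0:ℝ)..xmax, S₁ x t * p x| +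
        |(∫ x in (0:ℝ)..xmax, I₂ x t * p x) - ∫ x in (0:ℝ)..xmax, I₁ x t * p x| ≤
      8 * (Real.exp (M * T) - 1) *
        ⨆ τ : Icc (0:ℝ) T, (|s₂ τ - s₁ τ| + |i₂ τ - i₁ τ|) := by
  intro t ht
  set Δ : ℝ := ⨆ τ : Icc (0:ℝ) T, (|s₂ τ - s₁ τ| + |i₂ τ - i₁ τ|) with hΔdef
  have hT0 : (0:ℝ) ≤ T := hT.le
  have h0T : (0:ℝ) ∈ Icc (0:ℝ) T := ⟨le_refl 0, hT0⟩
  -- basic facts about Δ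
  have hbdd : BddAbove (Set.range fun τ : Icc (0:ℝ) T => |s₂ τ - s₁ τ| + |i₂ τ - i₁ τ|) := by
    refine ⟨2*R, ?_⟩
    rintro y ⟨τ, rfl⟩
    have h1 := h₁E τ τ.2
    have h2 := h₂E τ τ.2
    have t1 : |s₂ τ.1 - s₁ τ.1| ≤ |s₂ τ.1 - s₀| + |s₁ τ.1 - s₀| := by
      have := abs_sub (s₂ τ.1 - s₀) (s₁ τ.1 - s₀)
      rw [show s₂ τ.1 - s₀ - (s₁ τ.1 - s₀) = s₂ τ.1 - s₁ τ.1 from by ring] at this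
      exact this
    have t2 : |i₂ τ.1 - i₁ τ.1| ≤ |i₂ τ.1 - i₀| + |i₁ τ.1 - i₀| := by
      have := abs_sub (i₂ τ.1 - i₀) (i₁ τ.1 - i₀)
      rw [show i₂ τ.1 - i₀ - (i₁ τ.1 - i₀) = i₂ τ.1 - i₁ τ.1 from by ring] at this
      exact this
    simp only
    linarith
  have hΔle : ∀ τ ∈ Icc (0:ℝ) T, |s₂ τ - s₁ τ| + |i₂ τ - i₁ τ| ≤ Δ := by
    intro τ hτ
    exact le_ciSup hbdd ⟨τ, hτ⟩
  have hΔ0 : 0 ≤ Δ :=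
    le_trans (add_nonneg (abs_nonneg _) (abs_nonneg _)) (hΔle 0 h0T)
  -- facts about M
  obtain ⟨hMmem, hMub⟩ := hM
  obtain ⟨x₀, hx₀, hMx₀⟩ := hMmem
  have hMge : ∀ x ∈ Icc (0:ℝ) xmax, Cfn x ≤ M := fun x hx =>
    hMub (mem_image_of_mem _ hx)
  have hD0 : (0:ℝ) < max DI DS := lt_max_of_lt_left hDI
  have hd0 : (0:ℝ) < min DI DS := lt_min hDI hDS
  have hn₀R : (0:ℝ) ≤ n₀ + R := by rw [hn₀]; linarith
  have hNp0 : ∀ x ∈ Icc (0:ℝ) xmax, 0 ≤ Nplus x := by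
    intro x hx
    rw [hNplus x]
    have h1 : 0 ≤ max DI DS / min DI DS * (n₀ + R) * (x / m) :=
      mul_nonneg (mul_nonneg (div_nonneg hD0.le hd0.le) hn₀R) (div_nonneg hx.1 hm.le)
    linarith [hS₀nonneg x hx, hI₀nonneg x hx]
  have hDM : max DI DS ≤ M := by
    rw [← hMx₀, hCfn x₀]
    have := mul_nonneg (by linarith : (0:ℝ) ≤ 2*β₀) (hNp0 x₀ hx₀)
    linarith
  have hM0 : 0 < M := lt_of_lt_of_le hD0 hDM
  set E1 : ℝ := Real.exp (M*T) - 1 with hE1def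
  have hE1 : 0 ≤ E1 := by
    rw [hE1def]
    linarith [Real.one_le_exp (mul_nonneg hM0.le hT0)]
  -- global bound B on Nplus
  set B : ℝ := (M - μ - DI - max DI DS)/(2*β₀) with hBdef
  have h2B : 2*β₀*B = M - μ - DI - max DI DS := by
    rw [hBdef]; field_simp
  have hNpB : ∀ x ∈ Icc (0:ℝ) xmax, Nplus x ≤ B := by
    intro x hx
    have h1 := hMge x hx
    rw [hCfn x] at h1
    nlinarith
  have hB0 : 0 ≤ B := le_trans (hNp0 x₀ hx₀) (hNpB x₀ hx₀)
  -- boxes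
  have hbox₁ : ∀ x ∈ Icc (0:ℝ) xmax, ∀ τ ∈ Icc (0:ℝ) T, |I₁ x τ| ≤ B ∧ |S₁ x τ| ≤ B := by
    intro x hx τ hτ
    obtain ⟨hs, hi, hn⟩ := h₁pos x hx τ hτ
    have := hNpB x hx
    constructor
    · rw [abs_of_nonneg hi]; linarith
    · rw [abs_of_nonneg hs]; linarith
  have hbox₂ : ∀ x ∈ Icc (0:ℝ) xmax, ∀ τ ∈ Icc (0:ℝ) T, |I₂ x τ| ≤ B ∧ |S₂ x τ| ≤ B := by
    intro x hx τ hτ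
    obtain ⟨hs, hi, hn⟩ := h₂pos x hx τ hτ
    have := hNpB x hx
    constructor
    · rw [abs_of_nonneg hi]; linarith
    · rw [abs_of_nonneg hs]; linarith
  have hKB1 : μ + 2*β₀*B + DS ≤ M := by
    have := le_max_right DI DS
    linarith
  have hKB2 : μ + 2*β₀*B + DI ≤ M := by
    have := le_max_left DI DS
    linarith
  -- pointwise Grönwall estimate
  have key : ∀ x ∈ Icc (0:ℝ) xmax,
      |S₂ x t - S₁ x t| ≤ x/m * Δ * E1 ∧ |I₂ x t - I₁ x t| ≤ x/m * Δ * E1 := by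
    intro x hx
    have hxm : 0 ≤ x/m := div_nonneg hx.1 hm.le
    have hK1 : μ + 2*β₀*(Nplus x) + DS ≤ M := by
      have h1 := hMge x hx
      rw [hCfn x] at h1
      have := le_max_right DI DS
      linarith
    have hK2 : μ + 2*β₀*(Nplus x) + DI ≤ M := by
      have h1 := hMge x hx
      rw [hCfn x] at h1
      have := le_max_left DI DS
      linarith
    have hboxx : ∀ τ ∈ Icc (0:ℝ) T, |I₁ x τ| ≤ Nplus x ∧ |S₂ x τ| ≤ Nplus x := by
      intro τ hτ
      obtain ⟨hs1, hi1, hn1⟩ := h₁pos x hx τ hτ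
      obtain ⟨hs2, hi2, hn2⟩ := h₂pos x hx τ hτ
      exact ⟨by rw [abs_of_nonneg hi1]; linarith, by rw [abs_of_nonneg hs2]; linarith⟩
    have hg := sir_gronwall_core (ε := max DI DS * (x/m * Δ)) (δ := (0:ℝ))
      hT0 hμ.le hβ₀.le hDS.le hDI.le (hNp0 x hx)
      (hS₁eq x hx) (hI₁eq x hx) (hS₂eq x hx) (hI₂eq x hx)
      hboxx hK1 hK2
      (by
        intro τ hτ
        have heq : x / m * s₂ τ - x / m * s₁ τ = x/m * (s₂ τ - s₁ τ) := by ring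
        rw [heq, abs_mul, abs_of_nonneg hxm]
        have h1 : |s₂ τ - s₁ τ| ≤ Δ :=
          le_trans (by linarith [abs_nonneg (i₂ τ - i₁ τ)]) (hΔle τ hτ)
        have h2 : x/m * |s₂ τ - s₁ τ| ≤ x/m * Δ := mul_le_mul_of_nonneg_left h1 hxm
        exact mul_le_mul (le_max_right DI DS) h2 (by positivity) hD0.le)
      (by
        intro τ hτ
        have heq : x / m * i₂ τ - x / m * i₁ τ = x/m * (i₂ τ - i₁ τ) := by ring
        rw [heq, abs_mul, abs_of_nonneg hxm]
        have h1 : |i₂ τ - i₁ τ| ≤ Δ :=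
          le_trans (by linarith [abs_nonneg (s₂ τ - s₁ τ)]) (hΔle τ hτ)
        have h2 : x/m * |i₂ τ - i₁ τ| ≤ x/m * Δ := mul_le_mul_of_nonneg_left h1 hxm
        exact mul_le_mul (le_max_left DI DS) h2 (by positivity) hD0.le)
      (by rw [hS₂init x hx, hS₁init x hx, sub_self, abs_zero])
      (by rw [hI₂init x hx, hI₁init x hx, sub_self, abs_zero])
      t ht
    have hgb : gronwallBound 0 M (max DI DS * (x/m * Δ)) t ≤ x/m * Δ * E1 := by
      simp only [gronwallBound_of_K_ne_0 hM0.ne', zero_mul, zero_add]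
      have h1 : Real.exp (M*t) ≤ Real.exp (M*T) :=
        Real.exp_le_exp.mpr (mul_le_mul_of_nonneg_left ht.2 hM0.le)
      have h2 : 1 ≤ Real.exp (M*t) := Real.one_le_exp (mul_nonneg hM0.le ht.1)
      have hdiv : max DI DS * (x/m * Δ) / M ≤ x/m * Δ := by
        rw [div_le_iff₀ hM0]
        nlinarith [mul_nonneg hxm hΔ0]
      calc max DI DS * (x/m * Δ) / M * (Real.exp (M*t) - 1)
          ≤ (x/m * Δ) * (Real.exp (M*T) - 1) :=
            mul_le_mul hdiv (by linarith) (by linarith) (mul_nonneg hxm hΔ0)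
        _ = x/m * Δ * E1 := by rw [hE1def]
    exact ⟨hg.1.trans hgb, hg.2.trans hgb⟩
  -- Lipschitz bounds for the initial data
  have hLip : ∃ L : ℝ, 0 ≤ L ∧ ∀ x ∈ Icc (0:ℝ) xmax, ∀ y ∈ Icc (0:ℝ) xmax,
      |S₀ x - S₀ y| ≤ L * |x - y| ∧ |I₀ x - I₀ y| ≤ L * |x - y| := by
    obtain ⟨L1, hL1⟩ := isCompact_Icc.exists_bound_of_continuousOn
      ((hS₀.continuous_deriv le_rfl).continuousOn (s := Icc (0:ℝ) xmax))
    obtain ⟨L2, hL2⟩ := isCompact_Icc.exists_bound_of_continuousOn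
      ((hI₀.continuous_deriv le_rfl).continuousOn (s := Icc (0:ℝ) xmax))
    refine ⟨max (max L1 L2) 0, le_max_right _ _, ?_⟩
    intro x hx y hy
    constructor
    · have h := Convex.norm_image_sub_le_of_norm_deriv_le
        (fun z _ => (hS₀.differentiable one_ne_zero).differentiableAt)
        (fun z hz => le_trans (hL1 z hz) (le_trans (le_max_left L1 L2) (le_max_left _ 0)))
        (convex_Icc (0:ℝ) xmax) hy hx
      simpa [Real.norm_eq_abs] using h
    · have h := Convex.norm_image_sub_le_of_norm_deriv_le
        (fun z _ => (hI₀.differentiable one_ne_zero).differentiableAt)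
        (fun z hz => le_trans (hL2 z hz) (le_trans (le_max_right L1 L2) (le_max_left _ 0)))
        (convex_Icc (0:ℝ) xmax) hy hx
      simpa [Real.norm_eq_abs] using h
  obtain ⟨L, hL0, hLip⟩ := hLip
  -- bounds for the data trajectories
  have hCs : (0:ℝ) ≤ n₀ + R := hn₀R
  have hs₁bd : ∀ τ ∈ Icc (0:ℝ) T, |s₁ τ| ≤ n₀ + R := by
    intro τ hτ
    rw [abs_of_nonneg (hs₁nonneg τ hτ), hn₀]
    have := h₁E τ hτ
    have h1 := le_abs_self (s₁ τ - s₀)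
    have h2 := abs_nonneg (i₁ τ - i₀)
    linarith
  have hi₁bd : ∀ τ ∈ Icc (0:ℝ) T, |i₁ τ| ≤ n₀ + R := by
    intro τ hτ
    rw [abs_of_nonneg (hi₁nonneg τ hτ), hn₀]
    have := h₁E τ hτ
    have h1 := le_abs_self (i₁ τ - i₀)
    have h2 := abs_nonneg (s₁ τ - s₀)
    linarith
  have hs₂bd : ∀ τ ∈ Icc (0:ℝ) T, |s₂ τ| ≤ n₀ + R := by
    intro τ hτ
    rw [abs_of_nonneg (hs₂nonneg τ hτ), hn₀]
    have := h₂E τ hτ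
    have h1 := le_abs_self (s₂ τ - s₀)
    have h2 := abs_nonneg (i₂ τ - i₀)
    linarith
  have hi₂bd : ∀ τ ∈ Icc (0:ℝ) T, |i₂ τ| ≤ n₀ + R := by
    intro τ hτ
    rw [abs_of_nonneg (hi₂nonneg τ hτ), hn₀]
    have := h₂E τ hτ
    have h1 := le_abs_self (i₂ τ - i₀)
    have h2 := abs_nonneg (s₂ τ - s₀)
    linarith
  -- continuity in x
  have hcont₁ := sir_cont_in_x hm hμ hβ₀ hDS hDI hT0 hB0 hM0 hCs hL0
    hS₁eq hI₁eq hbox₁ hKB1 hKB2 hs₁bd hi₁bd hS₁init hI₁init hLip t ht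
  have hcont₂ := sir_cont_in_x hm hμ hβ₀ hDS hDI hT0 hB0 hM0 hCs hL0
    hS₂eq hI₂eq hbox₂ hKB1 hKB2 hs₂bd hi₂bd hS₂init hI₂init hLip t ht
  -- integrability
  have hu : uIcc (0:ℝ) xmax = Icc (0:ℝ) xmax := uIcc_of_le hxmax.le
  have hpi : IntervalIntegrable p MeasureTheory.volume 0 xmax := by
    by_contra h
    rw [intervalIntegral.integral_undef h] at hp_int
    exact one_ne_zero hp_int.symm
  have hxpi : IntervalIntegrable (fun x => x * p x) MeasureTheory.volume 0 xmax :=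
    hpi.continuousOn_mul (by rw [hu]; exact continuousOn_id)
  have hS1pi : IntervalIntegrable (fun x => S₁ x t * p x) MeasureTheory.volume 0 xmax :=
    hpi.continuousOn_mul (by rw [hu]; exact hcont₁.1)
  have hI1pi : IntervalIntegrable (fun x => I₁ x t * p x) MeasureTheory.volume 0 xmax :=
    hpi.continuousOn_mul (by rw [hu]; exact hcont₁.2)
  have hS2pi : IntervalIntegrable (fun x => S₂ x t * p x) MeasureTheory.volume 0 xmax :=
    hpi.continuousOn_mul (by rw [hu]; exact hcont₂.1)
  have hI2pi : IntervalIntegrable (fun x => I₂ x t * p x) MeasureTheory.volume 0 xmax :=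
    hpi.continuousOn_mul (by rw [hu]; exact hcont₂.2)
  -- bound each component
  have compS : |(∫ x in (0:ℝ)..xmax, S₂ x t * p x) - ∫ x in (0:ℝ)..xmax, S₁ x t * p x| ≤
      E1 * Δ := by
    have heq : (∫ x in (0:ℝ)..xmax, S₂ x t * p x) - ∫ x in (0:ℝ)..xmax, S₁ x t * p x =
        ∫ x in (0:ℝ)..xmax, (S₂ x t * p x - S₁ x t * p x) :=
      (intervalIntegral.integral_sub hS2pi hS1pi).symm
    rw [heq]
    refine (intervalIntegral.abs_integral_le_integral_abs hxmax.le).trans ?_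
    have h3 : (∫ x in (0:ℝ)..xmax, |S₂ x t * p x - S₁ x t * p x|) ≤
        ∫ x in (0:ℝ)..xmax, (E1 * Δ / m) * (x * p x) := by
      apply intervalIntegral.integral_mono_on hxmax.le (hS2pi.sub hS1pi).abs
        (hxpi.const_mul _)
      intro x hx
      have hpx := hp_nonneg x hx
      have hkey := (key x hx).1
      have habs : |S₂ x t * p x - S₁ x t * p x| = |S₂ x t - S₁ x t| * p x := by
        rw [show S₂ x t * p x - S₁ x t * p x = (S₂ x t - S₁ x t) * p x from by ring,
          abs_mul, abs_of_nonneg hpx]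
      rw [habs]
      calc |S₂ x t - S₁ x t| * p x ≤ (x/m * Δ * E1) * p x :=
            mul_le_mul_of_nonneg_right hkey hpx
        _ = E1 * Δ / m * (x * p x) := by ring
    refine h3.trans ?_
    rw [intervalIntegral.integral_const_mul, ← hm_def, div_mul_cancel₀ _ hm.ne']
  have compI : |(∫ x in (0:ℝ)..xmax, I₂ x t * p x) - ∫ x in (0:ℝ)..xmax, I₁ x t * p x| ≤
      E1 * Δ := by
    have heq : (∫ x in (0:ℝ)..xmax, I₂ x t * p x) - ∫ x in (0:ℝ)..xmax, I₁ x t * p x =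
        ∫ x in (0:ℝ)..xmax, (I₂ x t * p x - I₁ x t * p x) :=
      (intervalIntegral.integral_sub hI2pi hI1pi).symm
    rw [heq]
    refine (intervalIntegral.abs_integral_le_integral_abs hxmax.le).trans ?_
    have h3 : (∫ x in (0:ℝ)..xmax, |I₂ x t * p x - I₁ x t * p x|) ≤
        ∫ x in (0:ℝ)..xmax, (E1 * Δ / m) * (x * p x) := by
      apply intervalIntegral.integral_mono_on hxmax.le (hI2pi.sub hI1pi).abs
        (hxpi.const_mul _)
      intro x hx
      have hpx := hp_nonneg x hx
      have hkey := (key x hx).2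
      have habs : |I₂ x t * p x - I₁ x t * p x| = |I₂ x t - I₁ x t| * p x := by
        rw [show I₂ x t * p x - I₁ x t * p x = (I₂ x t - I₁ x t) * p x from by ring,
          abs_mul, abs_of_nonneg hpx]
      rw [habs]
      calc |I₂ x t - I₁ x t| * p x ≤ (x/m * Δ * E1) * p x :=
            mul_le_mul_of_nonneg_right hkey hpx
        _ = E1 * Δ / m * (x * p x) := by ring
    refine h3.trans ?_
    rw [intervalIntegral.integral_const_mul, ← hm_def, div_mul_cancel₀ _ hm.ne']
  have hfin : 2 * (E1 * Δ) ≤ 8 * E1 * Δ := by nlinarith [mul_nonneg hE1 hΔ0]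
  calc |(∫ x in (0:ℝ)..xmax, S₂ x t * p x) - ∫ x in (0:ℝ)..xmax, S₁ x t * p x| +
        |(∫ x in (0:ℝ)..xmax, I₂ x t * p x) - ∫ x in (0:ℝ)..xmax, I₁ x t * p x|
      ≤ 2 * (E1 * Δ) := by linarith
    _ ≤ 8 * E1 * Δ := hfin
    _ = 8 * (Real.exp (M * T) - 1) * Δ := by rw [hE1def]
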